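/- Let n ≥ 2 be an integer. There exists a constant c_n > 0, depending only on n, such that every number field L of degree n over ℚ contains a nonzero element x ∈ 𝓞_L with Tr^L_ℚ(x) = 0 and house(x) ≤ c_n · D_L^{1/(2(n−1))}, where D_L = |disc(L/ℚ)|. -/

import Mathlib

open NumberField Module

open scoped NNReal ENNReal

section Aux

variable {L : Type} [Field L] [NumberField L]

/-- Bound the house by a bound at all infinite places. -/
lemma house_le_of_infinitePlace_le {z : L} {B : ℝ} (hB : 0 ≤ B)
    (h : ∀ w : InfinitePlace L, w z ≤ B) : NumberField.house z ≤ B := by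
  rw [NumberField.house]
  refine (pi_norm_le_iff_of_nonneg hB).2 fun φ => ?_
  rw [NumberField.canonicalEmbedding.apply_at]
  have := h (NumberField.InfinitePlace.mk φ)
  rwa [NumberField.InfinitePlace.apply] at this

end Aux

/-- every number field `L` of degree `n ≥ 2` contains a nonzero integer of
trace zero and house at most `c_n · D_L^{1/(2(n-1))}`. -/
theorem exists_traceZero_integer_small_house (n : ℕ) (hn : 2 ≤ n) :
    ∃ c : ℝ, 0 < c ∧
      ∀ (L : Type) [Field L] [NumberField L], finrank ℚ L = n →
        ∃ x : L, x ≠ 0 ∧ IsIntegral ℤ x ∧ Algebra.trace ℚ L x = 0 ∧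
          NumberField.house x ≤
            c * ((NumberField.discr L).natAbs : ℝ) ^ ((1 : ℝ) / (2 * ((n : ℝ) - 1))) := by
  classical
  refine ⟨2 * n * (4 ^ n + 1), by positivity, ?_⟩
  intro L _ _ hrank
  set D : ℕ := (NumberField.discr L).natAbs with hD
  have hD1 : 1 ≤ D := Int.natAbs_pos.2 (NumberField.discr_ne_zero L)
  set P : ℝ≥0 := (D : ℝ≥0) ^ ((1 : ℝ) / (2 * ((n : ℝ) - 1))) with hPdef
  have hn1 : (0:ℝ) < (n : ℝ) - 1 := by
    have : (2:ℝ) ≤ (n:ℝ) := by exact_mod_cast hn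
    linarith
  have hP1 : 1 ≤ P := by
    apply NNReal.one_le_rpow (by exact_mod_cast hD1)
    positivity
  set R : ℝ≥0 := 4 ^ n * P with hRdef
  have hR1 : 1 ≤ R := le_trans hP1 (by
    calc P = 1 * P := (one_mul P).symm
    _ ≤ 4 ^ n * P := by gcongr; exact one_le_pow₀ (by norm_num))
  -- the key volume inequality
  have hPn : P ^ (n - 1) = NNReal.sqrt (D : ℝ≥0) := by
    rw [hPdef, ← NNReal.rpow_natCast _ (n - 1), ← NNReal.rpow_mul, NNReal.sqrt_eq_rpow]
    congr 1
    rw [show ((n - 1 : ℕ) : ℝ) = (n : ℝ) - 1 by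
      push_cast [Nat.cast_sub (by omega : 1 ≤ n)]; ring]
    field_simp
  have hRn : R ^ (n - 1) = 2 ^ (2 * (n * (n - 1))) * NNReal.sqrt (D : ℝ≥0) := by
    rw [hRdef, mul_pow, hPn, show (4 : ℝ≥0) = 2 ^ 2 by norm_num, ← pow_mul, ← pow_mul]
  have hvol : NumberField.mixedEmbedding.minkowskiBound L ↑1 < ((R : ℝ≥0∞)) ^ (n - 1) := by
    rw [NumberField.mixedEmbedding.minkowskiBound,
      NumberField.mixedEmbedding.volume_fundamentalDomain_fractionalIdealLatticeBasis,
      Units.val_one, FractionalIdeal.absNorm_one, Rat.cast_one, ENNReal.ofReal_one, one_mul,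
      NumberField.mixedEmbedding.finrank, hrank,
      NumberField.mixedEmbedding.volume_fundamentalDomain_latticeBasis]
    rw [show ‖NumberField.discr L‖₊ = (D : ℝ≥0) from (NNReal.natCast_natAbs _).symm,
      ← ENNReal.coe_pow, hRn, ENNReal.coe_mul, ENNReal.coe_pow, ENNReal.coe_ofNat]
    have hS0 : ((NNReal.sqrt (D : ℝ≥0) : ℝ≥0) : ℝ≥0∞) ≠ 0 := by
      have hDne : (D : ℝ≥0) ≠ 0 := Nat.cast_ne_zero.2 (by omega)
      simpa [NNReal.sqrt_eq_zero] using hDne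
    have hST : ((NNReal.sqrt (D : ℝ≥0) : ℝ≥0) : ℝ≥0∞) ≠ ⊤ := ENNReal.coe_ne_top
    have hlt : (2 : ℝ≥0∞) ^ n < 2 ^ (2 * (n * (n - 1))) := by
      rw [show (2 : ℝ≥0∞) = ((2 : ℝ≥0) : ℝ≥0∞) from (ENNReal.coe_ofNat _).symm,
        ← ENNReal.coe_pow, ← ENNReal.coe_pow, ENNReal.coe_lt_coe]
      refine pow_lt_pow_right₀ one_lt_two ?_
      have : n * 1 ≤ n * (n - 1) := Nat.mul_le_mul_left _ (by omega)
      omega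
    calc (2 : ℝ≥0∞)⁻¹ ^ NumberField.InfinitePlace.nrComplexPlaces L
          * ↑(NNReal.sqrt (D : ℝ≥0)) * 2 ^ n
        ≤ 1 * ↑(NNReal.sqrt (D : ℝ≥0)) * 2 ^ n := by
          gcongr
          exact pow_le_one₀ (by positivity) (ENNReal.inv_le_one.2 one_le_two)
      _ = ↑(NNReal.sqrt (D : ℝ≥0)) * 2 ^ n := by rw [one_mul]
      _ < ↑(NNReal.sqrt (D : ℝ≥0)) * 2 ^ (2 * (n * (n - 1))) := by
          exact ENNReal.mul_lt_mul_right hS0 hST hlt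
      _ = 2 ^ (2 * (n * (n - 1))) * ↑(NNReal.sqrt (D : ℝ≥0)) := mul_comm _ _
  -- existence of a suitable `a`
  have main : ∃ a : 𝓞 L, a ≠ 0 ∧ (∀ w : InfinitePlace L, w (a : L) ≤ (R : ℝ) + 1) ∧
      (∀ m : ℤ, (a : L) ≠ (m : L)) := by
    by_cases hcx : ∃ w : InfinitePlace L, w.IsComplex
    · obtain ⟨w₀, hw₀⟩ := hcx
      set f : InfinitePlace L → ℝ≥0 := fun w => if w = w₀ then NNReal.sqrt R else R with hf
      have hprod : ∏ w : InfinitePlace L, f w ^ w.mult = R ^ (n - 1) := by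
        rw [← Finset.prod_erase_mul _ _ (Finset.mem_univ w₀)]
        have h1 : ∏ w ∈ Finset.univ.erase w₀, f w ^ w.mult =
            ∏ w ∈ Finset.univ.erase w₀, R ^ w.mult :=
          Finset.prod_congr rfl fun w hw => by
            rw [hf]; simp only [if_neg (Finset.ne_of_mem_erase hw)]
        have h2 : ∑ w ∈ Finset.univ.erase w₀, w.mult = n - 2 := by
          have := NumberField.InfinitePlace.sum_mult_eq (K := L)
          rw [← Finset.add_sum_erase _ _ (Finset.mem_univ w₀)] at this
          rw [hrank] at this
          have hm : w₀.mult = 2 := by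
            rw [NumberField.InfinitePlace.mult]
            simp [NumberField.InfinitePlace.not_isReal_iff_isComplex.2 hw₀]
          omega
        have h3 : f w₀ ^ w₀.mult = R := by
          have hm' : w₀.mult = 2 := by
            rw [NumberField.InfinitePlace.mult]
            simp [NumberField.InfinitePlace.not_isReal_iff_isComplex.2 hw₀]
          simp only [hf, if_pos rfl, hm', NNReal.sq_sqrt]
        rw [h1, Finset.prod_pow_eq_pow_sum, h2, h3, ← pow_succ]
        congr 1
        omega
      have hvol' : NumberField.mixedEmbedding.minkowskiBound L ↑1 <
          MeasureTheory.volume (NumberField.mixedEmbedding.convexBodyLT' L f ⟨w₀, hw₀⟩) := by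
        rw [NumberField.mixedEmbedding.convexBodyLT'_volume, hprod]
        refine hvol.trans_le ?_
        conv_lhs => rw [← one_mul ((R : ℝ≥0∞) ^ (n - 1))]
        rw [← ENNReal.coe_pow]
        exact mul_le_mul_left (by exact_mod_cast
          NumberField.mixedEmbedding.one_le_convexBodyLT'Factor L) _
      obtain ⟨a, h_nz, h_le, h_re, h_im⟩ :=
        NumberField.mixedEmbedding.exists_ne_zero_mem_ringOfIntegers_lt' L ⟨w₀, hw₀⟩ hvol'
      have him' : |(NumberField.InfinitePlace.embedding w₀ (a : L)).im| < (R : ℝ) := by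
        have : ((f w₀ : ℝ≥0) : ℝ) ^ 2 = (R : ℝ) := by
          simp only [hf, if_pos rfl]
          rw [← NNReal.coe_pow, NNReal.sq_sqrt]
        rwa [this] at h_im
      refine ⟨a, h_nz, fun w => ?_, fun m hm => ?_⟩
      · by_cases hw : w = w₀
        · subst hw
          rw [← NumberField.InfinitePlace.norm_embedding_eq]
          calc ‖NumberField.InfinitePlace.embedding w (a : L)‖
              ≤ |(NumberField.InfinitePlace.embedding w (a : L)).re| +
                |(NumberField.InfinitePlace.embedding w (a : L)).im| := by
                exact Complex.norm_le_abs_re_add_abs_im _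
            _ ≤ 1 + (R : ℝ) := add_le_add h_re.le him'.le
            _ = (R : ℝ) + 1 := add_comm _ _
        · refine (h_le w hw).le.trans ?_
          rw [hf]
          simp only [if_neg hw]
          linarith
      · have he : NumberField.InfinitePlace.embedding w₀ (a : L) = (m : ℂ) := by
          rw [hm, map_intCast]
        rw [he] at h_re
        simp only [Complex.intCast_re] at h_re
        have hm0 : m = 0 := Int.abs_lt_one_iff.1 (by
          exact_mod_cast (by rwa [← Int.cast_abs] at h_re : ((|m| : ℤ) : ℝ) < 1))
        rw [hm0] at hm
        exact h_nz (by simpa using RingOfIntegers.coe_eq_zero_iff.1 (by simpa using hm))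
    · have hreal : ∀ w : InfinitePlace L, w.IsReal := fun w =>
        w.isReal_or_isComplex.resolve_right fun h => hcx ⟨w, h⟩
      obtain ⟨w₀⟩ := (inferInstance : Nonempty (InfinitePlace L))
      set f : InfinitePlace L → ℝ≥0 := fun w => if w = w₀ then 1 else R with hf
      have hprod : ∏ w : InfinitePlace L, f w ^ w.mult = R ^ (n - 1) := by
        rw [← Finset.prod_erase_mul _ _ (Finset.mem_univ w₀)]
        have h1 : ∏ w ∈ Finset.univ.erase w₀, f w ^ w.mult =
            ∏ w ∈ Finset.univ.erase w₀, R ^ w.mult :=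
          Finset.prod_congr rfl fun w hw => by
            rw [hf]; simp only [if_neg (Finset.ne_of_mem_erase hw)]
        have h2 : ∑ w ∈ Finset.univ.erase w₀, w.mult = n - 1 := by
          have := NumberField.InfinitePlace.sum_mult_eq (K := L)
          rw [← Finset.add_sum_erase _ _ (Finset.mem_univ w₀)] at this
          rw [hrank] at this
          have hm : w₀.mult = 1 := by
            rw [NumberField.InfinitePlace.mult]
            simp [hreal w₀]
          omega
        have h3 : f w₀ ^ w₀.mult = 1 := by rw [hf]; simp
        rw [h1, Finset.prod_pow_eq_pow_sum, h2, h3, mul_one]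
      have hvol' : NumberField.mixedEmbedding.minkowskiBound L ↑1 <
          MeasureTheory.volume (NumberField.mixedEmbedding.convexBodyLT L f) := by
        rw [NumberField.mixedEmbedding.convexBodyLT_volume, hprod]
        refine hvol.trans_le ?_
        conv_lhs => rw [← one_mul ((R : ℝ≥0∞) ^ (n - 1))]
        rw [← ENNReal.coe_pow]
        exact mul_le_mul_left (by exact_mod_cast
          NumberField.mixedEmbedding.one_le_convexBodyLTFactor L) _
      obtain ⟨a, h_nz, h_le⟩ :=
        NumberField.mixedEmbedding.exists_ne_zero_mem_ringOfIntegers_lt L hvol'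
      refine ⟨a, h_nz, fun w => ?_, fun m hm => ?_⟩
      · refine (h_le w).le.trans ?_
        rw [hf]
        by_cases hw : w = w₀
        · simp only [if_pos hw]
          have h1R : (1 : ℝ) ≤ (R : ℝ) := by exact_mod_cast hR1
          push_cast
          linarith
        · simp only [if_neg hw]
          linarith
      · have := h_le w₀
        rw [hm, hf] at this
        simp only [if_pos rfl] at this
        have hw0 : w₀ ((m : ℤ) : L) = |(m : ℝ)| := by
          rw [← NumberField.InfinitePlace.norm_embedding_eq, map_intCast]
          simp
        rw [hw0] at this
        have hm0 : m = 0 := Int.abs_lt_one_iff.1 (by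
          exact_mod_cast (by rwa [← Int.cast_abs] at this : ((|m| : ℤ) : ℝ) < 1))
        rw [hm0] at hm
        exact h_nz (by simpa using RingOfIntegers.coe_eq_zero_iff.1 (by simpa using hm))
  obtain ⟨a, h_nz, hbd, hint⟩ := main
  -- the trace of `a` as an integer
  set t : ℤ := Algebra.intTrace ℤ (𝓞 L) a with htdef
  have ht : (t : ℚ) = Algebra.trace ℚ L (a : L) := by
    have := Algebra.algebraMap_intTrace (A := ℤ) (K := ℚ) (L := L) (B := 𝓞 L) a
    simpa using this
  have hxL : ((n * a - (t : 𝓞 L) : 𝓞 L) : L) = (n : L) * (a : L) - (t : L) := by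
    push_cast
    norm_cast
  refine ⟨((n * a - (t : 𝓞 L) : 𝓞 L) : L), ?_, RingOfIntegers.isIntegral_coe _, ?_, ?_⟩
  · -- nonzero
    rw [hxL]
    intro h0
    have hn0 : ((n : ℚ)) ≠ 0 := Nat.cast_ne_zero.2 (by omega)
    have hnL : ((n : L)) ≠ 0 := Nat.cast_ne_zero.2 (by omega)
    have hmul : (n : L) * (a : L) = (t : L) := by
      have := sub_eq_zero.1 h0
      exact this
    have ha : (a : L) = algebraMap ℚ L ((t : ℚ) / (n : ℚ)) := by
      rw [map_div₀, map_intCast, map_natCast, eq_div_iff hnL, mul_comm, hmul]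
    have hint' : IsIntegral ℤ ((t : ℚ) / (n : ℚ)) :=
      (isIntegral_algebraMap_iff (algebraMap ℚ L).injective).1
        (ha ▸ RingOfIntegers.isIntegral_coe a)
    obtain ⟨m, hmq⟩ := IsIntegrallyClosed.isIntegral_iff.1 hint'
    refine hint m ?_
    rw [ha, ← hmq]
    simp
  · -- trace zero
    rw [hxL, map_sub]
    have h1 : Algebra.trace ℚ L ((n : L) * (a : L)) = (n : ℚ) * (t : ℚ) := by
      rw [show ((n : L)) * (a : L) = (n : ℚ) • (a : L) by
        rw [Algebra.smul_def, map_natCast]]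
      rw [map_smul, smul_eq_mul, ← ht]
    have h2 : Algebra.trace ℚ L ((t : L)) = (t : ℚ) * (n : ℚ) := by
      rw [show ((t : L)) = algebraMap ℚ L ((t : ℚ)) by rw [map_intCast]]
      rw [Algebra.trace_algebraMap, hrank, nsmul_eq_mul]
      ring
    rw [h1, h2]
    ring
  · -- house bound
    have hPr : (((NumberField.discr L).natAbs : ℝ)) ^ ((1 : ℝ) / (2 * ((n : ℝ) - 1))) = (P : ℝ) := by
      rw [hPdef]
      simp [NNReal.coe_rpow, hD]
    rw [hPr, hxL]
    have hP1' : (1 : ℝ) ≤ (P : ℝ) := by exact_mod_cast hP1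
    have hR0 : (0 : ℝ) ≤ (R : ℝ) + 1 := by positivity
    have hhouse_a : NumberField.house (a : L) ≤ (R : ℝ) + 1 :=
      house_le_of_infinitePlace_le hR0 hbd
    have hσ : ∀ σ : L →ₐ[ℚ] ℂ, ‖σ (a : L)‖ ≤ (R : ℝ) + 1 := fun σ => by
      have := hbd (NumberField.InfinitePlace.mk (σ : L →+* ℂ))
      rwa [NumberField.InfinitePlace.apply] at this
    have htsum : (((t : ℚ)) : ℂ) = ∑ σ : L →ₐ[ℚ] ℂ, σ (a : L) := by
      rw [show (((t : ℚ)) : ℂ) = algebraMap ℚ ℂ (t : ℚ) from rfl, ht]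
      exact trace_eq_sum_embeddings (E := ℂ)
    have htabs : |(t : ℝ)| ≤ (n : ℝ) * ((R : ℝ) + 1) := by
      have h1 : ‖(((t : ℚ)) : ℂ)‖ ≤ (n : ℝ) * ((R : ℝ) + 1) := by
        rw [htsum]
        calc ‖∑ σ : L →ₐ[ℚ] ℂ, σ (a : L)‖ ≤ ∑ σ : L →ₐ[ℚ] ℂ, ‖σ (a : L)‖ :=
              norm_sum_le _ _
          _ ≤ ∑ _σ : L →ₐ[ℚ] ℂ, ((R : ℝ) + 1) := Finset.sum_le_sum fun σ _ => hσ σ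
          _ = (Fintype.card (L →ₐ[ℚ] ℂ) : ℝ) * ((R : ℝ) + 1) := by
              rw [Finset.sum_const, Finset.card_univ, nsmul_eq_mul]
          _ = (n : ℝ) * ((R : ℝ) + 1) := by rw [AlgHom.card, hrank]
      have h2 : ‖(((t : ℚ)) : ℂ)‖ = |(t : ℝ)| := by
        rw [Complex.norm_ratCast]
        push_cast
        rfl
      rwa [h2] at h1
    have hsub : NumberField.house ((n : L) * (a : L) - (t : L)) ≤
        NumberField.house ((n : L) * (a : L)) + NumberField.house ((t : L)) := by
      simp only [NumberField.house, map_sub]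
      exact norm_sub_le _ _
    have hmulb : NumberField.house ((n : L) * (a : L)) ≤ (n : ℝ) * ((R : ℝ) + 1) := by
      calc NumberField.house ((n : L) * (a : L))
          ≤ NumberField.house ((n : L)) * NumberField.house (a : L) :=
            NumberField.house_mul_le _ _
        _ ≤ (n : ℝ) * ((R : ℝ) + 1) := by
            have h3 : NumberField.house ((n : L)) = (n : ℝ) := by
              rw [show ((n : L)) = (((n : ℤ) : ℤ) : L) by push_cast; ring,
                NumberField.house_intCast]
              simp
            rw [h3]
            exact mul_le_mul_of_nonneg_left hhouse_a (by positivity)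
    have htb : NumberField.house ((t : L)) = |(t : ℝ)| := by
      rw [NumberField.house_intCast]
      push_cast
      rfl
    have hRP : (R : ℝ) = 4 ^ n * (P : ℝ) := by
      rw [hRdef]
      push_cast
      ring
    have key : (n : ℝ) * ((R : ℝ) + 1) + (n : ℝ) * ((R : ℝ) + 1) ≤
        2 * n * (4 ^ n + 1) * (P : ℝ) := by
      have hnn : (0 : ℝ) ≤ (n : ℝ) := by positivity
      have h4 : (0 : ℝ) ≤ (4 : ℝ) ^ n := by positivity
      nlinarith [mul_le_mul_of_nonneg_left hP1' hnn]
    calc NumberField.house ((n : L) * (a : L) - (t : L))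
        ≤ NumberField.house ((n : L) * (a : L)) + NumberField.house ((t : L)) := hsub
      _ ≤ (n : ℝ) * ((R : ℝ) + 1) + |(t : ℝ)| := by rw [htb] at *; linarith [hmulb]
      _ ≤ (n : ℝ) * ((R : ℝ) + 1) + (n : ℝ) * ((R : ℝ) + 1) := by linarith [htabs]
      _ ≤ 2 * n * (4 ^ n + 1) * (P : ℝ) := key
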